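/- Let L > 0 and c_p > 0. For each t ∈ ℕ let f_t : E → ℝ be convex, differentiable and L-smooth, with a common minimizer x* ∈ E satisfying f_t(x*) ≤ f_t(y) for all y ∈ E and all t. Starting from x_0 ∈ E, define SGD iterates x_{t+1} = x_t − η_t∇f_t(x_t), where (η_t) are the AdaSPS stepsizes with ℓ_t = f_t(x*), and assume ∇f_t(x_t) ≠ 0 for all t. If c_p·√(f_0(x_0) − f_0(x*)) ≥ 1, then for every t ∈ ℕ: (a) ‖x_{t+1} − x*‖² ≤ ‖x_t − x*‖² − η_t·⟨∇f_t(x_t), x_t − x*⟩, and in particular ‖x_{t+1} − x*‖ ≤ ‖x_t − x*‖; and (b) η_t ≥ 1/(4·c_p²·L²·‖x_0 − x*‖²). -/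

import Mathlib

open Finset RealInnerProductSpace

lemma descent_aux {d : ℕ} (f : EuclideanSpace ℝ (Fin d) → ℝ)
    (G : EuclideanSpace ℝ (Fin d) → EuclideanSpace ℝ (Fin d)) (L : ℝ) (hL : 0 < L)
    (hgrad : ∀ y, HasGradientAt f (G y) y)
    (hsmooth : ∀ a b, ‖G a - G b‖ ≤ L * ‖a - b‖) (u v : EuclideanSpace ℝ (Fin d)) :
    f v ≤ f u + ⟪G u, v - u⟫ + L / 2 * ‖v - u‖ ^ 2 := by
  set w := v - u with hw
  have hγ : ∀ t : ℝ, HasDerivAt (fun t : ℝ => u + t • w) w t := by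
    intro t
    simpa using ((hasDerivAt_id t).smul_const w).const_add u
  have hφ : ∀ t : ℝ, HasDerivAt (fun t => f (u + t • w)) ⟪G (u + t • w), w⟫ t := by
    intro t
    have h1 := ((hgrad (u + t • w)).hasFDerivAt).comp_hasDerivAt t (hγ t)
    exact h1
  set ψ : ℝ → ℝ := fun t => f (u + t • w) - t * ⟪G u, w⟫ - L / 2 * t ^ 2 * ‖w‖ ^ 2 with hψdef
  have hψ : ∀ t : ℝ, HasDerivAt ψ (⟪G (u + t • w), w⟫ - ⟪G u, w⟫ - L * t * ‖w‖ ^ 2) t := by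
    intro t
    have h2 : HasDerivAt (fun t : ℝ => t * ⟪G u, w⟫) ⟪G u, w⟫ t := by
      simpa using (hasDerivAt_id t).mul_const ⟪G u, w⟫
    have h3 : HasDerivAt (fun t : ℝ => L / 2 * t ^ 2 * ‖w‖ ^ 2) (L * t * ‖w‖ ^ 2) t := by
      have := ((hasDerivAt_pow 2 t).const_mul (L / 2)).mul_const (‖w‖ ^ 2)
      refine this.congr_deriv ?_
      ring
    exact ((hφ t).sub h2).sub h3
  have hanti : AntitoneOn ψ (Set.Icc (0:ℝ) 1) := by
    apply antitoneOn_of_deriv_nonpos (convex_Icc 0 1)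
    · exact fun t ht => ((hψ t).differentiableAt.continuousAt).continuousWithinAt
    · exact fun t ht => ((hψ t).differentiableAt).differentiableWithinAt
    · intro t ht
      rw [interior_Icc] at ht
      rw [(hψ t).deriv]
      have h4 : ⟪G (u + t • w) - G u, w⟫ ≤ L * t * ‖w‖ ^ 2 := by
        calc ⟪G (u + t • w) - G u, w⟫ ≤ ‖G (u + t • w) - G u‖ * ‖w‖ :=
              real_inner_le_norm _ _
          _ ≤ L * ‖(u + t • w) - u‖ * ‖w‖ := by
              have := hsmooth (u + t • w) u
              nlinarith [norm_nonneg w]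
          _ = L * t * ‖w‖ ^ 2 := by
              rw [add_sub_cancel_left, norm_smul]
              simp [abs_of_nonneg (le_of_lt ht.1)]
              ring
      rw [inner_sub_left] at h4
      linarith
  have hkey := hanti (Set.mem_Icc.2 ⟨le_refl 0, zero_le_one⟩)
    (Set.mem_Icc.2 ⟨zero_le_one, le_refl 1⟩) zero_le_one
  simp only [hψdef] at hkey
  have : u + (1:ℝ) • w = v := by rw [one_smul, hw]; abel
  rw [this] at hkey
  simp only [zero_smul, add_zero, one_pow, mul_one, one_mul, zero_mul, mul_zero,
    sub_zero, zero_pow, zero_mul] at hkey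
  linarith

lemma gradsq_aux {d : ℕ} (f : EuclideanSpace ℝ (Fin d) → ℝ)
    (G : EuclideanSpace ℝ (Fin d) → EuclideanSpace ℝ (Fin d)) (L : ℝ) (hL : 0 < L)
    (xstar : EuclideanSpace ℝ (Fin d))
    (hgrad : ∀ y, HasGradientAt f (G y) y)
    (hsmooth : ∀ a b, ‖G a - G b‖ ≤ L * ‖a - b‖)
    (hmin : ∀ y, f xstar ≤ f y) (u : EuclideanSpace ℝ (Fin d)) :
    ‖G u‖ ^ 2 ≤ 2 * L * (f u - f xstar) := by
  have hd := descent_aux f G L hL hgrad hsmooth u (u - L⁻¹ • G u)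
  have hv : u - L⁻¹ • G u - u = -(L⁻¹ • G u) := by abel
  rw [hv, inner_neg_right, real_inner_smul_right, real_inner_self_eq_norm_sq,
    norm_neg, norm_smul] at hd
  have hm := hmin (u - L⁻¹ • G u)
  have habs : ‖(L⁻¹ : ℝ)‖ = L⁻¹ := by
    rw [Real.norm_eq_abs, abs_of_pos (inv_pos.2 hL)]
  rw [habs] at hd
  have h5 : L / 2 * (L⁻¹ * ‖G u‖) ^ 2 = L⁻¹ / 2 * ‖G u‖ ^ 2 := by
    field_simp
  rw [h5] at hd
  have h6 : L⁻¹ / 2 * ‖G u‖ ^ 2 ≤ f u - f xstar := by linarith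
  have h7 := mul_le_mul_of_nonneg_left h6 (by linarith : (0:ℝ) ≤ 2 * L)
  have h8 : 2 * L * (L⁻¹ / 2 * ‖G u‖ ^ 2) = ‖G u‖ ^ 2 := by
    field_simp
  linarith

/-- AdaSPS under interpolation, per-step estimates: with convex `L`-smooth `f t`
sharing a common minimizer `x*`, SGD iterates with AdaSPS stepsizes
(`ℓ t = f t x*`), nonzero gradients at the iterates and
`c_p √(f_0(x_0) − f_0(x*)) ≥ 1`, for every `t`:
(a) `‖x_{t+1} − x*‖² ≤ ‖x_t − x*‖² − η_t ⟨∇f_t(x_t), x_t − x*⟩`, in particular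
    `‖x_{t+1} − x*‖ ≤ ‖x_t − x*‖`; and
(b) `η_t ≥ 1/(4 c_p² L² ‖x_0 − x*‖²)`. -/
theorem stmt_14 {d : ℕ} (L c_p : ℝ) (hL : 0 < L) (hcp : 0 < c_p)
    (xstar : EuclideanSpace ℝ (Fin d))
    (f : ℕ → EuclideanSpace ℝ (Fin d) → ℝ)
    (G : ℕ → EuclideanSpace ℝ (Fin d) → EuclideanSpace ℝ (Fin d))
    (x : ℕ → EuclideanSpace ℝ (Fin d)) (η : ℕ → ℝ)
    (hgrad : ∀ t y, HasGradientAt (f t) (G t y) y)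
    (hconv : ∀ t u v, f t v ≥ f t u + ⟪G t u, v - u⟫)
    (hsmooth : ∀ t u v, ‖G t u - G t v‖ ≤ L * ‖u - v‖)
    (hmin : ∀ t y, f t xstar ≤ f t y)
    (hGne : ∀ t, G t (x t) ≠ 0)
    (hη0 : η 0 = (f 0 (x 0) - f 0 xstar) /
      (c_p * ‖G 0 (x 0)‖ ^ 2 * Real.sqrt (f 0 (x 0) - f 0 xstar)))
    (hη : ∀ t, η (t + 1) = min
      ((f (t + 1) (x (t + 1)) - f (t + 1) xstar) /
        (c_p * ‖G (t + 1) (x (t + 1))‖ ^ 2 *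
          Real.sqrt (∑ s ∈ range (t + 2), (f s (x s) - f s xstar))))
      (η t))
    (hx : ∀ t, x (t + 1) = x t - η t • G t (x t))
    (hscale : 1 ≤ c_p * Real.sqrt (f 0 (x 0) - f 0 xstar)) :
    ∀ t : ℕ,
      (‖x (t + 1) - xstar‖ ^ 2 ≤
          ‖x t - xstar‖ ^ 2 - η t * ⟪G t (x t), x t - xstar⟫ ∧
        ‖x (t + 1) - xstar‖ ≤ ‖x t - xstar‖) ∧
      η t ≥ 1 / (4 * c_p ^ 2 * L ^ 2 * ‖x 0 - xstar‖ ^ 2) := by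
  set gap : ℕ → ℝ := fun t => f t (x t) - f t xstar with hgapdef
  set S : ℕ → ℝ := fun t => ∑ s ∈ range (t + 1), gap s with hSdef
  have Gsq : ∀ t, ‖G t (x t)‖ ^ 2 ≤ 2 * L * gap t := fun t =>
    gradsq_aux (f t) (G t) L hL xstar (hgrad t) (hsmooth t) (hmin t) (x t)
  have gap_pos : ∀ t, 0 < gap t := by
    intro t
    have h2 : 0 < ‖G t (x t)‖ := norm_pos_iff.2 (hGne t)
    nlinarith [Gsq t]
  have Spos : ∀ t, 0 < S t := by
    intro t
    exact Finset.sum_pos (fun s _ => gap_pos s) (nonempty_range_add_one)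
  have Ssucc : ∀ t, S (t + 1) = S t + gap (t + 1) := fun t => Finset.sum_range_succ _ _
  have Smono : ∀ s t, s ≤ t → S s ≤ S t := by
    intro s t hst
    induction t with
    | zero => simp_all
    | succ n ih =>
      rcases Nat.lt_or_ge s (n + 1) with h | h
      · have := ih (Nat.lt_succ_iff.1 h)
        rw [Ssucc]
        linarith [gap_pos (n + 1)]
      · have : s = n + 1 := le_antisymm hst h
        simp [this]
  have S0 : S 0 = gap 0 := by simp [hSdef]
  have sqrtSpos : ∀ t, 0 < Real.sqrt (S t) := fun t => Real.sqrt_pos.2 (Spos t)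
  have hscale' : ∀ t, 1 ≤ c_p * Real.sqrt (S t) := by
    intro t
    have h1 : Real.sqrt (gap 0) ≤ Real.sqrt (S t) := by
      apply Real.sqrt_le_sqrt
      rw [← S0]; exact Smono 0 t (Nat.zero_le t)
    calc (1:ℝ) ≤ c_p * Real.sqrt (gap 0) := hscale
      _ ≤ c_p * Real.sqrt (S t) := by nlinarith
  have Gpos : ∀ t, 0 < ‖G t (x t)‖ ^ 2 := fun t =>
    pow_pos (norm_pos_iff.2 (hGne t)) 2
  have denpos : ∀ t, 0 < c_p * ‖G t (x t)‖ ^ 2 * Real.sqrt (S t) := fun t => by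
    have := Gpos t; have := sqrtSpos t; positivity
  have ηle : ∀ t, η t ≤ gap t / (c_p * ‖G t (x t)‖ ^ 2 * Real.sqrt (S t)) := by
    intro t
    cases t with
    | zero => rw [hη0]; rw [hSdef]; simp [S0]; exact le_rfl
    | succ n =>
      rw [hη n]
      exact min_le_left _ _
  have ηlb : ∀ t, 1 / (2 * c_p * L * Real.sqrt (S t)) ≤ η t := by
    have ratio : ∀ t, 1 / (2 * c_p * L * Real.sqrt (S t)) ≤
        gap t / (c_p * ‖G t (x t)‖ ^ 2 * Real.sqrt (S t)) := by
      intro t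
      rw [div_le_div_iff₀ (by have := sqrtSpos t; positivity) (denpos t)]
      have h1 := Gsq t
      have h2 := sqrtSpos t
      have h3 := gap_pos t
      nlinarith [sqrtSpos t, mul_pos hcp h2]
    intro t
    induction t with
    | zero => rw [hη0, hSdef]; simpa [S0] using ratio 0
    | succ n ih =>
      rw [hη n]
      refine le_min (ratio (n + 1)) ?_
      refine le_trans ?_ ih
      have h1 : Real.sqrt (S n) ≤ Real.sqrt (S (n + 1)) :=
        Real.sqrt_le_sqrt (Smono n (n + 1) (Nat.le_succ n))
      apply one_div_le_one_div_of_le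
      · have := sqrtSpos n; positivity
      · have h2 := mul_le_mul_of_nonneg_left h1 (by positivity : (0:ℝ) ≤ 2 * c_p * L)
        linarith
  have ηpos : ∀ t, 0 < η t := by
    intro t
    refine lt_of_lt_of_le ?_ (ηlb t)
    have := sqrtSpos t; positivity
  have ηmono : ∀ s t, s ≤ t → η t ≤ η s := by
    intro s t hst
    induction t with
    | zero => simp_all
    | succ n ih =>
      rcases Nat.lt_or_ge s (n + 1) with h | h
      · exact le_trans (by rw [hη n]; exact min_le_right _ _) (ih (Nat.lt_succ_iff.1 h))
      · have : s = n + 1 := le_antisymm hst h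
        simp [this]
  have ηG : ∀ t, η t * ‖G t (x t)‖ ^ 2 ≤ gap t := by
    intro t
    have h1 := ηle t
    have h2 := hscale' t
    have h3 := gap_pos t
    have h4 := Gpos t
    have h5 := sqrtSpos t
    have h6 : gap t / (c_p * ‖G t (x t)‖ ^ 2 * Real.sqrt (S t)) * ‖G t (x t)‖ ^ 2 ≤
        gap t := by
      rw [div_mul_eq_mul_div, div_le_iff₀ (denpos t)]
      nlinarith [mul_pos h3 h4]
    exact le_trans (mul_le_mul_of_nonneg_right h1 (le_of_lt h4)) h6
  have inner_ge : ∀ t, gap t ≤ ⟪G t (x t), x t - xstar⟫ := by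
    intro t
    have h1 := hconv t (x t) xstar
    have h2 : ⟪G t (x t), xstar - x t⟫ = -⟪G t (x t), x t - xstar⟫ := by
      rw [← inner_neg_right]
      congr 1
      abel
    rw [h2] at h1
    simp only [hgapdef]
    linarith
  have partA : ∀ t, ‖x (t + 1) - xstar‖ ^ 2 ≤
      ‖x t - xstar‖ ^ 2 - η t * ⟪G t (x t), x t - xstar⟫ := by
    intro t
    have hx1 : x (t + 1) - xstar = (x t - xstar) - η t • G t (x t) := by
      rw [hx t]; abel
    rw [hx1, norm_sub_sq_real, real_inner_smul_right, norm_smul,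
      real_inner_comm (x t - xstar) (G t (x t)), Real.norm_eq_abs,
      abs_of_pos (ηpos t)]
    have h2 : gap t ≤ ⟪x t - xstar, G t (x t)⟫ := by
      rw [real_inner_comm]; exact inner_ge t
    nlinarith [mul_le_mul_of_nonneg_left (ηG t) (ηpos t).le,
      mul_le_mul_of_nonneg_left h2 (ηpos t).le]
  have partA2 : ∀ t, ‖x (t + 1) - xstar‖ ≤ ‖x t - xstar‖ := by
    intro t
    have h1 := partA t
    have h2 : η t * gap t ≤ η t * ⟪G t (x t), x t - xstar⟫ :=
      mul_le_mul_of_nonneg_left (inner_ge t) (ηpos t).le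
    have h3 : ‖x (t + 1) - xstar‖ ^ 2 ≤ ‖x t - xstar‖ ^ 2 := by
      nlinarith [mul_pos (ηpos t) (gap_pos t)]
    have h4 := Real.sqrt_le_sqrt h3
    rwa [Real.sqrt_sq (norm_nonneg _), Real.sqrt_sq (norm_nonneg _)] at h4
  have D0pos : 0 < ‖x 0 - xstar‖ := by
    by_contra h
    push_neg at h
    have h0 : ‖x 0 - xstar‖ = 0 := le_antisymm h (norm_nonneg _)
    have h1 := inner_ge 0
    have h2 := real_inner_le_norm (G 0 (x 0)) (x 0 - xstar)
    rw [h0, mul_zero] at h2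
    have := gap_pos 0
    linarith
  have telescope : ∀ t, ∑ s ∈ range (t + 1), η s * gap s ≤
      ‖x 0 - xstar‖ ^ 2 - ‖x (t + 1) - xstar‖ ^ 2 := by
    intro t
    induction t with
    | zero =>
      rw [Finset.sum_range_one]
      have h2 : η 0 * gap 0 ≤ η 0 * ⟪G 0 (x 0), x 0 - xstar⟫ :=
        mul_le_mul_of_nonneg_left (inner_ge 0) (ηpos 0).le
      have := partA 0
      linarith
    | succ n ih =>
      rw [Finset.sum_range_succ]
      have h2 : η (n + 1) * gap (n + 1) ≤
          η (n + 1) * ⟪G (n + 1) (x (n + 1)), x (n + 1) - xstar⟫ :=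
        mul_le_mul_of_nonneg_left (inner_ge (n + 1)) (ηpos (n + 1)).le
      have := partA (n + 1)
      linarith
  have Sle : ∀ t, η t * S t ≤ ‖x 0 - xstar‖ ^ 2 := by
    intro t
    have h1 : η t * S t = ∑ s ∈ range (t + 1), η t * gap s := by
      rw [hSdef]; exact Finset.mul_sum _ _ _
    have h2 : ∑ s ∈ range (t + 1), η t * gap s ≤ ∑ s ∈ range (t + 1), η s * gap s := by
      apply Finset.sum_le_sum
      intro s hs
      exact mul_le_mul_of_nonneg_right
        (ηmono s t (Nat.le_of_lt_succ (Finset.mem_range.1 hs))) (gap_pos s).le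
    have h3 := telescope t
    have h4 : (0:ℝ) ≤ ‖x (t + 1) - xstar‖ ^ 2 := sq_nonneg _
    rw [h1]
    linarith
  intro t
  refine ⟨⟨partA t, partA2 t⟩, ?_⟩
  have h1 := ηlb t
  have h2 := Sle t
  have hA : Real.sqrt (S t) ^ 2 = S t := Real.sq_sqrt (Spos t).le
  have hDpos : 0 < 2 * c_p * L * Real.sqrt (S t) := by
    have := sqrtSpos t; positivity
  have h3 : 1 ≤ η t * (2 * c_p * L * Real.sqrt (S t)) := (div_le_iff₀ hDpos).1 h1
  have h4' : (1:ℝ) * 1 ≤ (η t * (2 * c_p * L * Real.sqrt (S t))) *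
      (η t * (2 * c_p * L * Real.sqrt (S t))) :=
    mul_le_mul h3 h3 zero_le_one (by positivity)
  have h4'' : (η t * (2 * c_p * L * Real.sqrt (S t))) *
      (η t * (2 * c_p * L * Real.sqrt (S t))) =
      4 * c_p ^ 2 * L ^ 2 * (η t * (η t * S t)) := by
    linear_combination (4 * c_p ^ 2 * L ^ 2 * η t ^ 2) * hA
  rw [h4'', one_mul] at h4'
  have h7 : η t * (η t * S t) ≤ η t * ‖x 0 - xstar‖ ^ 2 :=
    mul_le_mul_of_nonneg_left h2 (ηpos t).le
  have h8 := mul_le_mul_of_nonneg_left h7 (by positivity : (0:ℝ) ≤ 4 * c_p ^ 2 * L ^ 2)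
  rw [ge_iff_le, div_le_iff₀ (by positivity : (0:ℝ) < 4 * c_p ^ 2 * L ^ 2 * ‖x 0 - xstar‖ ^ 2)]
  nlinarith [h4', h8]
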